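/- Let G be a Hausdorff locally compact topological group. Then G is NSS if and only if G is uniformly NSS. -/

import Mathlib

open Filter Set Topology Pointwise

/-- The neighborhood `U` of the identity is uniformly free from small subgroups: for every
neighborhood `V` of the identity there is `n` such that every `x ∉ V` has `x ^ k ∉ U` for some
`1 ≤ k ≤ n`. -/
def UniformlyFreeFSS {G : Type*} [Group G] [TopologicalSpace G] (U : Set G) : Prop :=
  ∀ V ∈ 𝓝 (1 : G), ∃ n : ℕ, ∀ x : G, x ∉ V → ∃ k : ℕ, 1 ≤ k ∧ k ≤ n ∧ x ^ k ∉ U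

/-- A topological group is uniformly NSS if some neighborhood of the identity is uniformly free
from small subgroups. -/
def UNSS (G : Type*) [Group G] [TopologicalSpace G] : Prop :=
  ∃ U ∈ 𝓝 (1 : G), UniformlyFreeFSS U

/-- A topological group has no small subgroups if some neighborhood of the identity contains no
subgroup other than the trivial one. -/
def NSS (G : Type*) [Group G] [TopologicalSpace G] : Prop :=
  ∃ U ∈ 𝓝 (1 : G), ∀ H : Subgroup G, (H : Set G) ⊆ U → H = ⊥

theorem stmt_7 {G : Type*} [Group G] [TopologicalSpace G] [IsTopologicalGroup G] [T2Space G]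
    [LocallyCompactSpace G] :
    NSS G ↔ UNSS G := by
  constructor
  · rintro ⟨U, hU, hfree⟩
    -- get a compact symmetric neighborhood L ⊆ U
    obtain ⟨K, hKmem, hKU, hKcomp⟩ := local_compact_nhds hU
    set L : Set G := K ∩ K⁻¹ with hLdef
    have hLcomp : IsCompact L := hKcomp.inter_right hKcomp.inv.isClosed
    have hLclosed : IsClosed L := hLcomp.isClosed
    have hLmem : L ∈ 𝓝 (1 : G) := by
      apply Filter.inter_mem hKmem
      have h := (continuous_inv.continuousAt (x := (1:G))).preimage_mem_nhds
        (by simpa using hKmem : K ∈ 𝓝 ((1:G)⁻¹))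
      simpa [Set.inv_preimage] using h
    have hLU : L ⊆ U := fun x hx => hKU hx.1
    have hLsymm : L⁻¹ = L := by
      rw [hLdef, Set.inter_inv, inv_inv, Set.inter_comm]
    refine ⟨L, hLmem, ?_⟩
    intro V hV
    by_contra hcon
    push_neg at hcon
    -- work with the open interior of V
    have hVo : interior V ∈ 𝓝 (1 : G) := interior_mem_nhds.mpr hV
    have hcon' : ∀ n : ℕ, ∃ x : G, x ∉ interior V ∧ ∀ k : ℕ, 1 ≤ k → k ≤ n → x ^ k ∈ L := by
      intro n
      obtain ⟨x, hxV, hx⟩ := hcon n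
      exact ⟨x, fun h => hxV (interior_subset h), hx⟩
    set B : ℕ → Set G := fun n =>
      L ∩ (interior V)ᶜ ∩ ⋂ (k : ℕ) (_ : 1 ≤ k ∧ k ≤ n), (fun x : G => x ^ k) ⁻¹' L with hBdef
    have hBclosed : ∀ n, IsClosed (B n) := by
      intro n
      refine ((hLclosed.inter (isClosed_compl_iff.mpr isOpen_interior)).inter ?_)
      exact isClosed_iInter fun k => isClosed_iInter fun _ =>
        hLclosed.preimage (continuous_pow k)
    have hBcomp : ∀ n, IsCompact (B n) := fun n =>
      IsCompact.of_isClosed_subset hLcomp (hBclosed n) (fun x hx => hx.1.1)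
    have hBanti : ∀ m n : ℕ, m ≤ n → B n ⊆ B m := by
      intro m n hmn x hx
      obtain ⟨h1, h2⟩ := hx
      refine ⟨h1, ?_⟩
      simp only [Set.mem_iInter] at h2 ⊢
      exact fun k hk => h2 k ⟨hk.1, hk.2.trans hmn⟩
    have hBne : ∀ n, (B n).Nonempty := by
      intro n
      obtain ⟨x, hxV, hx⟩ := hcon' (max 1 n)
      refine ⟨x, ⟨⟨?_, hxV⟩, ?_⟩⟩
      · simpa using hx 1 le_rfl (le_max_left 1 n)
      · simp only [Set.mem_iInter]
        exact fun k hk => hx k hk.1 (hk.2.trans (le_max_right 1 n))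
    obtain ⟨x, hx⟩ := IsCompact.nonempty_iInter_of_directed_nonempty_isCompact_isClosed B
      (fun m n => ⟨max m n, hBanti m _ (le_max_left m n), hBanti n _ (le_max_right m n)⟩)
      hBne hBcomp hBclosed
    simp only [Set.mem_iInter] at hx
    have hxL : ∀ k : ℕ, 1 ≤ k → x ^ k ∈ L := by
      intro k hk
      have := (hx k).2
      simp only [Set.mem_iInter] at this
      exact this k ⟨hk, le_rfl⟩
    have hxV : x ∉ interior V := (hx 0).1.2
    have h1L : (1 : G) ∈ L := mem_of_mem_nhds hLmem
    -- the cyclic subgroup generated by x lies in U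
    have hsub : ((Subgroup.zpowers x : Subgroup G) : Set G) ⊆ U := by
      rintro y ⟨m, rfl⟩
      show x ^ m ∈ U
      rcases lt_trichotomy m 0 with hm | hm | hm
      · have : x ^ (-m) ∈ L := by
          obtain ⟨k, hk⟩ : ∃ k : ℕ, -m = (k : ℤ) := ⟨(-m).toNat, by omega⟩
          rw [hk, zpow_natCast]
          exact hxL k (by omega)
        have : (x ^ (-m))⁻¹ ∈ L⁻¹ := Set.inv_mem_inv.mpr this
        rw [hLsymm] at this
        simpa [zpow_neg] using hLU this
      · subst hm; simpa using hLU h1L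
      · obtain ⟨k, hk⟩ : ∃ k : ℕ, m = (k : ℤ) := ⟨m.toNat, by omega⟩
        rw [hk, zpow_natCast]
        exact hLU (hxL k (by omega))
    have := hfree _ hsub
    have hx1 : x = 1 := by
      have : x ∈ (⊥ : Subgroup G) := by
        rw [← this]; exact Subgroup.mem_zpowers x
      simpa using this
    exact hxV (hx1 ▸ mem_of_mem_nhds hVo)
  · rintro ⟨U, hU, hfree⟩
    refine ⟨U, hU, fun H hH => ?_⟩
    rw [Subgroup.eq_bot_iff_forall]
    intro x hx
    by_contra hx1
    have hVmem : ({x}ᶜ : Set G) ∈ 𝓝 (1 : G) :=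
      (isOpen_compl_singleton).mem_nhds (by simpa using Ne.symm hx1)
    obtain ⟨n, hn⟩ := hfree _ hVmem
    obtain ⟨k, hk1, hkn, hkU⟩ := hn x (by simp)
    exact hkU (hH (Subgroup.pow_mem H hx k))
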